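/- arXiv:2107.09431 — 2 statements merged into one kernel-verified Lean document; each statement's English description precedes it below -/
import Mathlib

section
/- If T and S admit A-adjoints and commute (TS = ST), then w_A(TS) ≤ 2 w_A(T) w_A(S). -/
open scoped ComplexOrder
open ContinuousLinearMap Filter Topology

variable {H : Type*} [NormedAddCommGroup H] [InnerProductSpace ℂ H] [CompleteSpace H]

/-- The A-semi-inner product `⟨x, y⟩_A = ⟨A x, y⟩` (Mathlib convention: conjugate
linear in the first variable). -/
noncomputable def aInner (A : H →L[ℂ] H) (x y : H) : ℂ := inner ℂ (A x) y

/-- The A-seminorm `‖x‖_A = sqrt ⟨x, x⟩_A`. -/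
noncomputable def aNorm (A : H →L[ℂ] H) (x : H) : ℝ := Real.sqrt (aInner A x x).re

/-- `T` is A-bounded. -/
def ABounded (A T : H →L[ℂ] H) : Prop := ∃ c > 0, ∀ x, aNorm A (T x) ≤ c * aNorm A x

/-- The A-operator seminorm. -/
noncomputable def opNormA (A T : H →L[ℂ] H) : ℝ :=
  sSup {r | ∃ x ∈ closure (Set.range A), aNorm A x = 1 ∧ r = aNorm A (T x)}

/-- The A-numerical radius. -/
noncomputable def wA (A T : H →L[ℂ] H) : ℝ :=
  sSup {r | ∃ x, aNorm A x = 1 ∧ r = ‖aInner A (T x) x‖}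

/-- The A-Crawford number. -/
noncomputable def cA (A T : H →L[ℂ] H) : ℝ :=
  sInf {r | ∃ x, aNorm A x = 1 ∧ r = ‖aInner A (T x) x‖}

/-- The `A_α`-seminorm `‖T‖_{A,α}`. -/
noncomputable def alphaNorm (A T : H →L[ℂ] H) (α : ℝ) : ℝ :=
  sSup {r | ∃ x, aNorm A x = 1 ∧
    r = Real.sqrt (α * ‖aInner A (T x) x‖ ^ 2 + (1 - α) * aNorm A (T x) ^ 2)}

/-- `S` is the A-adjoint `T^{♯_A}` of `T`: the solution of `A X = T* A` whose
range lies in the closure of the range of `A`. -/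
def IsAAdjoint (A T S : H →L[ℂ] H) : Prop :=
  A ∘L S = (ContinuousLinearMap.adjoint T) ∘L A ∧ ∀ x, S x ∈ closure (Set.range A)

private lemma le_of_sq_le_sq' {a b : ℝ} (hb : 0 ≤ b) (h : a ^ 2 ≤ b ^ 2) (ha : 0 ≤ a) :
    a ≤ b := by nlinarith

private lemma abs_sub_le'' (a b : ℂ) : ‖a - b‖ ≤ ‖a‖ + ‖b‖ := by
  simpa [sub_eq_add_neg] using norm_add_le a (-b)

variable {A : H →L[ℂ] H}

lemma aInner_self_re_nonneg (hA : A.IsPositive) (x : H) : 0 ≤ (aInner A x x).re := by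
  simpa [aInner, RCLike.re_to_complex] using hA.re_inner_nonneg_left x

lemma aInner_symm (hA : A.IsPositive) (x y : H) :
    aInner A y x = (starRingEnd ℂ) (aInner A x y) := by
  have hAd : ContinuousLinearMap.adjoint A = A := by
    rw [← ContinuousLinearMap.star_eq_adjoint]; exact hA.isSelfAdjoint
  unfold aInner
  have h := ContinuousLinearMap.adjoint_inner_left A x y
  rw [hAd] at h
  rw [h]
  exact (inner_conj_symm y (A x)).symm

lemma aNorm_nonneg (x : H) : 0 ≤ aNorm A x := Real.sqrt_nonneg _

lemma aNorm_sq (hA : A.IsPositive) (x : H) : aNorm A x ^ 2 = (aInner A x x).re :=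
  Real.sq_sqrt (aInner_self_re_nonneg hA x)

lemma aInner_smul_left (c : ℂ) (x y : H) :
    aInner A (c • x) y = (starRingEnd ℂ) c * aInner A x y := by
  simp [aInner, map_smul, inner_smul_left]; ring

lemma aInner_smul_right (c : ℂ) (x y : H) :
    aInner A x (c • y) = c * aInner A x y := by
  simp [aInner, inner_smul_right]

noncomputable def coreA (hA : A.IsPositive) : PreInnerProductSpace.Core ℂ H where
  inner := aInner A
  conj_inner_symm := fun x y => by
    show (starRingEnd ℂ) (aInner A y x) = aInner A x y
    rw [aInner_symm hA x y, Complex.conj_conj]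
  re_inner_nonneg := fun x => by simpa [RCLike.re_to_complex] using aInner_self_re_nonneg hA x
  add_left := fun x y z => by simp [aInner, map_add, inner_add_left]
  smul_left := fun x y r => by simp [aInner, map_smul, inner_smul_left]; ring

lemma abs_aInner_le (hA : A.IsPositive) (x y : H) :
    ‖aInner A x y‖ ≤ aNorm A x * aNorm A y := by
  have h := @InnerProductSpace.Core.inner_mul_inner_self_le ℂ H _ _ _ (coreA hA) x y
  have h1 : @inner ℂ H (coreA hA).toInner x y = aInner A x y := rfl
  have h2 : @inner ℂ H (coreA hA).toInner y x = aInner A y x := rfl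
  have h3 : @inner ℂ H (coreA hA).toInner x x = aInner A x x := rfl
  have h4 : @inner ℂ H (coreA hA).toInner y y = aInner A y y := rfl
  rw [h1, h2, h3, h4] at h
  have habs : ‖aInner A y x‖ = ‖aInner A x y‖ := by
    rw [aInner_symm hA x y]; simp
  rw [habs] at h
  apply le_of_sq_le_sq' (mul_nonneg (aNorm_nonneg x) (aNorm_nonneg y)) _ (norm_nonneg _)
  rw [mul_pow, aNorm_sq hA, aNorm_sq hA]
  calc ‖aInner A x y‖ ^ 2 = ‖aInner A x y‖ * ‖aInner A x y‖ := by
        ring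
    _ ≤ _ := by simpa [RCLike.re_to_complex] using h

lemma re_aInner_le (hA : A.IsPositive) (x y : H) :
    (aInner A x y).re ≤ aNorm A x * aNorm A y :=
  le_trans (Complex.re_le_norm _) (abs_aInner_le hA x y)

lemma aNorm_add_le (hA : A.IsPositive) (x y : H) :
    aNorm A (x + y) ≤ aNorm A x + aNorm A y := by
  apply le_of_sq_le_sq' (add_nonneg (aNorm_nonneg _) (aNorm_nonneg _)) _ (aNorm_nonneg _)
  rw [aNorm_sq hA]
  have hexp : aInner A (x + y) (x + y) = aInner A x x + aInner A x y + aInner A y x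
      + aInner A y y := by
    simp [aInner, map_add, inner_add_left, inner_add_right]; ring
  have hyx : (aInner A y x).re = (aInner A x y).re := by
    rw [aInner_symm hA x y]; simp
  have h1 := re_aInner_le hA x y
  have h2 := aNorm_sq hA x
  have h3 := aNorm_sq hA y
  rw [hexp]
  simp only [Complex.add_re]
  nlinarith [aNorm_nonneg (A := A) x, aNorm_nonneg (A := A) y]

lemma aNorm_smul (hA : A.IsPositive) (c : ℂ) (x : H) :
    aNorm A (c • x) = ‖c‖ * aNorm A x := by
  unfold aNorm
  have : aInner A (c • x) (c • x) = (Complex.normSq c : ℝ) * aInner A x x := by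
    simp [aInner, map_smul, inner_smul_left, inner_smul_right]
    rw [mul_left_comm, Complex.mul_conj, mul_comm]
  rw [this]
  rw [Complex.re_ofReal_mul, Real.sqrt_mul (Complex.normSq_nonneg c), ← Complex.sq_norm,
    Real.sqrt_sq (norm_nonneg c)]

/-- A-boundedness with nonneg constant. -/
def Bnd (A T : H →L[ℂ] H) : Prop := ∃ c : ℝ, 0 ≤ c ∧ ∀ x, aNorm A (T x) ≤ c * aNorm A x

lemma bnd_add {T S : H →L[ℂ] H} (hA : A.IsPositive) (hT : Bnd A T) (hS : Bnd A S) :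
    Bnd A (T + S) := by
  obtain ⟨c, hc, hcb⟩ := hT; obtain ⟨d, hd, hdb⟩ := hS
  refine ⟨c + d, by linarith, fun x => ?_⟩
  calc aNorm A ((T + S) x) = aNorm A (T x + S x) := by simp
    _ ≤ aNorm A (T x) + aNorm A (S x) := aNorm_add_le hA _ _
    _ ≤ c * aNorm A x + d * aNorm A x := add_le_add (hcb x) (hdb x)
    _ = (c + d) * aNorm A x := by ring

lemma bnd_neg {T : H →L[ℂ] H} (hT : Bnd A T) : Bnd A (-T) := by
  obtain ⟨c, hc, hcb⟩ := hT
  refine ⟨c, hc, fun x => ?_⟩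
  have : aNorm A ((-T) x) = aNorm A (T x) := by
    unfold aNorm aInner
    simp
  rw [this]; exact hcb x

lemma bnd_sub {T S : H →L[ℂ] H} (hA : A.IsPositive) (hT : Bnd A T) (hS : Bnd A S) :
    Bnd A (T - S) := by
  have := bnd_add hA hT (bnd_neg hS)
  simpa [sub_eq_add_neg] using this

lemma bnd_smul {T : H →L[ℂ] H} (hA : A.IsPositive) (hT : Bnd A T) (c : ℂ) :
    Bnd A (c • T) := by
  obtain ⟨d, hd, hdb⟩ := hT
  refine ⟨‖c‖ * d, by positivity, fun x => ?_⟩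
  calc aNorm A ((c • T) x) = ‖c‖ * aNorm A (T x) := by
        rw [ContinuousLinearMap.smul_apply, aNorm_smul hA]
    _ ≤ ‖c‖ * (d * aNorm A x) :=
        mul_le_mul_of_nonneg_left (hdb x) (norm_nonneg c)
    _ = ‖c‖ * d * aNorm A x := by ring

lemma bddAbove_wSet (hA : A.IsPositive) {T : H →L[ℂ] H} (hT : Bnd A T) :
    BddAbove {r | ∃ x, aNorm A x = 1 ∧ r = ‖aInner A (T x) x‖} := by
  obtain ⟨c, hc, hcb⟩ := hT
  refine ⟨c, fun r hr => ?_⟩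
  obtain ⟨x, hx, rfl⟩ := hr
  calc ‖aInner A (T x) x‖ ≤ aNorm A (T x) * aNorm A x := abs_aInner_le hA _ _
    _ ≤ c * aNorm A x * aNorm A x := by
        exact mul_le_mul_of_nonneg_right (hcb x) (aNorm_nonneg x)
    _ = c := by rw [hx]; ring

lemma le_wA (hA : A.IsPositive) {T : H →L[ℂ] H} (hT : Bnd A T) {x : H} (hx : aNorm A x = 1) :
    ‖aInner A (T x) x‖ ≤ wA A T :=
  le_csSup (bddAbove_wSet hA hT) ⟨x, hx, rfl⟩

lemma wA_nonneg (T : H →L[ℂ] H) : 0 ≤ wA A T :=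
  Real.sSup_nonneg (fun r hr => by obtain ⟨x, hx, rfl⟩ := hr; exact norm_nonneg _)

lemma wA_le {T : H →L[ℂ] H} {m : ℝ} (hm : 0 ≤ m)
    (h : ∀ x, aNorm A x = 1 → ‖aInner A (T x) x‖ ≤ m) : wA A T ≤ m :=
  Real.sSup_le (fun r hr => by obtain ⟨x, hx, rfl⟩ := hr; exact h x hx) hm

lemma abs_aInner_apply_le (hA : A.IsPositive) {T : H →L[ℂ] H} (hT : Bnd A T) (v : H) :
    ‖aInner A (T v) v‖ ≤ wA A T * aNorm A v ^ 2 := by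
  rcases eq_or_lt_of_le (aNorm_nonneg (A := A) v) with h0 | h0
  · have h1 := abs_aInner_le hA (T v) v
    rw [← h0] at h1 ⊢
    simpa using h1
  · set n := aNorm A v with hn
    set x := ((n⁻¹ : ℝ) : ℂ) • v with hx
    have hne : n ≠ 0 := ne_of_gt h0
    have hxn : aNorm A x = 1 := by
      rw [hx, aNorm_smul hA, Complex.norm_real, Real.norm_eq_abs, abs_of_nonneg (by positivity), ← hn]
      field_simp
    have hTx : aInner A (T x) x = (((n⁻¹ * n⁻¹ : ℝ)) : ℂ) * aInner A (T v) v := by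
      rw [hx, map_smul, aInner_smul_left, aInner_smul_right, Complex.conj_ofReal]
      push_cast
      ring
    have h2 := le_wA hA hT hxn
    rw [hTx, norm_mul, Complex.norm_real, Real.norm_eq_abs, abs_of_nonneg (by positivity)] at h2
    have h3 := mul_le_mul_of_nonneg_left h2 (le_of_lt (mul_pos h0 h0))
    have h4 : n * n * (n⁻¹ * n⁻¹ * ‖aInner A (T v) v‖)
        = ‖aInner A (T v) v‖ := by field_simp
    rw [h4] at h3
    calc ‖aInner A (T v) v‖ ≤ n * n * wA A T := h3
      _ = wA A T * n ^ 2 := by ring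

lemma apow_comm {R : H →L[ℂ] H} (hR : A ∘L R = (ContinuousLinearMap.adjoint R) ∘L A) :
    ∀ (k : ℕ) (x : H), A ((R ^ k) x) = (ContinuousLinearMap.adjoint (R ^ k)) (A x) := by
  intro k
  induction k with
  | zero =>
    intro x
    have : ContinuousLinearMap.adjoint (1 : H →L[ℂ] H) = 1 := by
      rw [← ContinuousLinearMap.star_eq_adjoint, star_one]
    simp [this]
  | succ k ih =>
    intro x
    have hRx : ∀ y, A (R y) = (ContinuousLinearMap.adjoint R) (A y) := by
      intro y
      have := congrArg (fun (f : H →L[ℂ] H) => f y) hR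
      simpa using this
    have h1 : (R ^ (k + 1)) x = (R ^ k) (R x) := by
      rw [pow_succ]; simp [ContinuousLinearMap.mul_apply]
    rw [h1, ih (R x), hRx x]
    have h2 : ContinuousLinearMap.adjoint (R ^ (k + 1))
        = (ContinuousLinearMap.adjoint (R ^ k)) ∘L (ContinuousLinearMap.adjoint R) := by
      rw [pow_succ']
      rw [ContinuousLinearMap.mul_def, ContinuousLinearMap.adjoint_comp]
    rw [h2]
    simp

lemma key_ineq (hA : A.IsPositive) {R : H →L[ℂ] H}
    (hR : A ∘L R = (ContinuousLinearMap.adjoint R) ∘L A) (k : ℕ) (x : H) :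
    aNorm A ((R ^ k) x) ^ 2 ≤ aNorm A x * aNorm A ((R ^ k) ((R ^ k) x)) := by
  have h1 : aInner A ((R ^ k) x) ((R ^ k) x) = aInner A x ((R ^ k) ((R ^ k) x)) := by
    unfold aInner
    rw [apow_comm hR k x, ContinuousLinearMap.adjoint_inner_left]
  rw [aNorm_sq hA, h1]
  exact le_trans (Complex.re_le_norm _) (abs_aInner_le hA _ _)

lemma aNorm_le_opNorm (hA : A.IsPositive) (v : H) :
    aNorm A v ≤ Real.sqrt ‖A‖ * ‖v‖ := by
  have h1 : (aInner A v v).re ≤ ‖A‖ * (‖v‖ * ‖v‖) := by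
    calc (aInner A v v).re ≤ ‖aInner A v v‖ := Complex.re_le_norm _
      _ = ‖(inner ℂ (A v) v : ℂ)‖ := rfl
      _ ≤ ‖A v‖ * ‖v‖ := norm_inner_le_norm _ _
      _ ≤ ‖A‖ * ‖v‖ * ‖v‖ := by
          exact mul_le_mul_of_nonneg_right (A.le_opNorm v) (norm_nonneg v)
      _ = ‖A‖ * (‖v‖ * ‖v‖) := by ring
  calc aNorm A v = Real.sqrt (aInner A v v).re := rfl
    _ ≤ Real.sqrt (‖A‖ * (‖v‖ * ‖v‖)) := Real.sqrt_le_sqrt h1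
    _ = Real.sqrt ‖A‖ * Real.sqrt (‖v‖ * ‖v‖) := Real.sqrt_mul (norm_nonneg A) _
    _ = Real.sqrt ‖A‖ * ‖v‖ := by rw [Real.sqrt_mul_self (norm_nonneg v)]

lemma bnd_of_rel (hA : A.IsPositive) {R : H →L[ℂ] H}
    (hR : A ∘L R = (ContinuousLinearMap.adjoint R) ∘L A) (x : H) :
    aNorm A (R x) ≤ ‖R‖ * aNorm A x := by
  set h := aNorm A x with hh
  set u : ℕ → ℝ := fun n => aNorm A ((R ^ (2 ^ n)) x) with hu
  have hun : ∀ n, 0 ≤ u n := fun n => aNorm_nonneg _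
  have c1 : ∀ n, u n ^ 2 ≤ h * u (n + 1) := by
    intro n
    have := key_ineq hA hR (2 ^ n) x
    have heq : (R ^ (2 ^ n)) ((R ^ (2 ^ n)) x) = (R ^ (2 ^ (n + 1))) x := by
      rw [← ContinuousLinearMap.mul_apply, ← pow_add]
      congr 2
      omega
    rw [heq] at this
    exact this
  have c2 : ∀ n, u n ≤ Real.sqrt ‖A‖ * (‖R‖ ^ (2 ^ n) * ‖x‖) := by
    intro n
    calc u n ≤ Real.sqrt ‖A‖ * ‖(R ^ (2 ^ n)) x‖ := aNorm_le_opNorm hA _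
      _ ≤ Real.sqrt ‖A‖ * (‖R ^ (2 ^ n)‖ * ‖x‖) := by
          exact mul_le_mul_of_nonneg_left ((R ^ (2 ^ n)).le_opNorm x) (Real.sqrt_nonneg _)
      _ ≤ Real.sqrt ‖A‖ * (‖R‖ ^ (2 ^ n) * ‖x‖) := by
          apply mul_le_mul_of_nonneg_left _ (Real.sqrt_nonneg _)
          exact mul_le_mul_of_nonneg_right (norm_pow_le' R (pow_pos two_pos n)) (norm_nonneg x)
  have c3 : ∀ n, u 0 ^ (2 ^ n) ≤ h ^ (2 ^ n - 1) * u n := by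
    intro n
    induction n with
    | zero => simpa using le_refl (u 0)
    | succ n ih =>
      have hpow : u 0 ^ (2 ^ (n + 1)) = (u 0 ^ (2 ^ n)) ^ 2 := by
        rw [pow_succ, pow_mul]
      have hstep : (u 0 ^ (2 ^ n)) ^ 2 ≤ (h ^ (2 ^ n - 1) * u n) ^ 2 := by
        apply pow_le_pow_left₀ (pow_nonneg (hun 0) _) ih
      have hexp : (h ^ (2 ^ n - 1) * u n) ^ 2 = h ^ (2 * (2 ^ n - 1)) * u n ^ 2 := by
        rw [mul_pow, ← pow_mul]
        ring_nf
      have hh0 : 0 ≤ h := aNorm_nonneg _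
      have hstep2 : h ^ (2 * (2 ^ n - 1)) * u n ^ 2 ≤ h ^ (2 * (2 ^ n - 1)) * (h * u (n + 1)) :=
        mul_le_mul_of_nonneg_left (c1 n) (pow_nonneg hh0 _)
      have hexp2 : h ^ (2 * (2 ^ n - 1)) * (h * u (n + 1)) = h ^ (2 ^ (n + 1) - 1) * u (n + 1) := by
        rw [← mul_assoc, ← pow_succ]
        congr 2
        have h2n : 1 ≤ 2 ^ n := Nat.one_le_two_pow
        omega
      rw [hpow]
      calc (u 0 ^ (2 ^ n)) ^ 2 ≤ (h ^ (2 ^ n - 1) * u n) ^ 2 := hstep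
        _ = h ^ (2 * (2 ^ n - 1)) * u n ^ 2 := hexp
        _ ≤ h ^ (2 * (2 ^ n - 1)) * (h * u (n + 1)) := hstep2
        _ = h ^ (2 ^ (n + 1) - 1) * u (n + 1) := hexp2
  -- now conclude
  have hu0R : aNorm A (R x) = u 0 := by simp [hu]
  rcases eq_or_lt_of_le (aNorm_nonneg (A := A) x) with hx0 | hx0
  · -- h = 0
    have hzero : h = 0 := by rw [hh, ← hx0]
    have h1 := c1 0
    rw [hzero] at h1
    simp at h1
    rw [hu0R, hzero, mul_zero]
    nlinarith [hun 0, hun 1]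
  · by_contra hcon
    push_neg at hcon
    rw [hu0R] at hcon
    set b := ‖R‖ * h with hb
    have hbnn : 0 ≤ b := mul_nonneg (norm_nonneg R) (le_of_lt hx0)
    have hmain : ∀ n, u 0 ^ (2 ^ n) ≤ (Real.sqrt ‖A‖ * ‖x‖ / h) * b ^ (2 ^ n) := by
      intro n
      calc u 0 ^ (2 ^ n) ≤ h ^ (2 ^ n - 1) * u n := c3 n
        _ ≤ h ^ (2 ^ n - 1) * (Real.sqrt ‖A‖ * (‖R‖ ^ (2 ^ n) * ‖x‖)) :=
            mul_le_mul_of_nonneg_left (c2 n) (pow_nonneg (le_of_lt hx0) _)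
        _ = (Real.sqrt ‖A‖ * ‖x‖ / h) * (h ^ (2 ^ n) * ‖R‖ ^ (2 ^ n)) := by
            have h2n : 1 ≤ 2 ^ n := Nat.one_le_two_pow
            have : h ^ (2 ^ n) = h ^ (2 ^ n - 1) * h := by
              rw [← pow_succ]
              congr 1
              omega
            rw [this]
            have hh0 : h ≠ 0 := ne_of_gt hx0
            field_simp
        _ = (Real.sqrt ‖A‖ * ‖x‖ / h) * b ^ (2 ^ n) := by
            rw [hb, mul_pow]
            ring_nf
    have hbpos : 0 < b := by
      rcases eq_or_lt_of_le hbnn with hb0 | hb0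
      · exfalso
        have h1 := hmain 1
        rw [← hb0] at h1
        simp at h1
        have : u 0 ≤ 0 := by nlinarith [hun 0]
        exact absurd hcon (by rw [← hb0]; linarith)
      · exact hb0
    -- now (u 0 / b) ^ (2^n) ≤ K, with u0/b > 1 : contradiction
    set q := u 0 / b with hq
    have hq1 : 1 < q := by
      rw [hq]
      rw [lt_div_iff₀ hbpos]
      linarith
    set K := Real.sqrt ‖A‖ * ‖x‖ / h with hK
    have hqn : ∀ n : ℕ, q ^ (2 ^ n) ≤ K := by
      intro n
      rw [hq, div_pow, div_le_iff₀ (pow_pos hbpos _)]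
      exact hmain n
    obtain ⟨n, hn⟩ := pow_unbounded_of_one_lt K hq1
    have : q ^ n ≤ q ^ (2 ^ n) :=
      pow_le_pow_right₀ (le_of_lt hq1) (le_of_lt (Nat.lt_two_pow_self (n := n)))
    have := lt_of_lt_of_le hn (le_trans this (hqn n))
    exact lt_irrefl K this

lemma bnd_of_aadjoint (hA : A.IsPositive) {T : H →L[ℂ] H}
    (hT : ∃ T', IsAAdjoint A T T') : Bnd A T := by
  obtain ⟨T', hT', _⟩ := hT
  -- A ∘L T' = (adjoint T) ∘L A ; take adjoints : adjoint T' ∘L A = A ∘L T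
  have hAd : ContinuousLinearMap.adjoint A = A := by
    rw [← ContinuousLinearMap.star_eq_adjoint]; exact hA.isSelfAdjoint
  have h1 : (ContinuousLinearMap.adjoint T') ∘L A = A ∘L T := by
    have := congrArg ContinuousLinearMap.adjoint hT'
    rw [ContinuousLinearMap.adjoint_comp, ContinuousLinearMap.adjoint_comp, hAd,
      ContinuousLinearMap.adjoint_adjoint] at this
    exact this
  set R := T' ∘L T with hRdef
  have hR : A ∘L R = (ContinuousLinearMap.adjoint R) ∘L A := by
    rw [hRdef, ContinuousLinearMap.adjoint_comp]
    ext v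
    simp only [ContinuousLinearMap.comp_apply]
    have e1 : A (T' (T v)) = (ContinuousLinearMap.adjoint T) (A (T v)) := by
      have := congrArg (fun (f : H →L[ℂ] H) => f (T v)) hT'
      simpa using this
    have e2 : (ContinuousLinearMap.adjoint T') (A v) = A (T v) := by
      have := congrArg (fun (f : H →L[ℂ] H) => f v) h1
      simpa using this
    rw [e1, e2.symm]
  refine ⟨Real.sqrt ‖R‖, Real.sqrt_nonneg _, fun x => ?_⟩
  have hTx2 : aNorm A (T x) ^ 2 ≤ ‖R‖ * aNorm A x ^ 2 := by
    have e3 : aInner A (T x) (T x) = aInner A x (R x) := by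
      unfold aInner
      have e1 : A (T x) = (ContinuousLinearMap.adjoint T') (A x) := by
        have := congrArg (fun (f : H →L[ℂ] H) => f x) h1
        simp at this
        exact this.symm
      rw [e1, ContinuousLinearMap.adjoint_inner_left]
      rfl
    rw [aNorm_sq hA, e3]
    calc (aInner A x (R x)).re ≤ aNorm A x * aNorm A (R x) := re_aInner_le hA _ _
      _ ≤ aNorm A x * (‖R‖ * aNorm A x) :=
          mul_le_mul_of_nonneg_left (bnd_of_rel hA hR x) (aNorm_nonneg _)
      _ = ‖R‖ * aNorm A x ^ 2 := by ring
  apply le_of_sq_le_sq' (mul_nonneg (Real.sqrt_nonneg _) (aNorm_nonneg _)) _ (aNorm_nonneg _)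
  rw [mul_pow, Real.sq_sqrt (norm_nonneg R)]
  exact hTx2

lemma power2_core (hA : A.IsPositive) {X : H →L[ℂ] H}
    (hb : ∀ v, ‖aInner A (X v) v‖ ≤ aNorm A v ^ 2)
    {x : H} (hx : aNorm A x = 1) :
    ‖aInner A (X (X x)) x‖ ≤ 1 := by
  by_cases h0 : aInner A (X (X x)) x = 0
  · rw [h0]; simp
  · set t := ‖aInner A (X (X x)) x‖ with ht
    have htpos : 0 < t := norm_pos_iff.mpr h0
    obtain ⟨μ, hμ⟩ := IsAlgClosed.exists_pow_nat_eq (k := ℂ)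
      ((starRingEnd ℂ) ((t : ℂ) / aInner A (X (X x)) x)) (n := 2) two_pos
    have habs2 : ‖μ ^ 2‖ = 1 := by
      rw [hμ, Complex.norm_conj, norm_div, Complex.norm_real, Real.norm_eq_abs, abs_of_pos htpos, ← ht,
        div_self (ne_of_gt htpos)]
    have hμabs : ‖μ‖ = 1 := by
      rw [norm_pow] at habs2
      nlinarith [norm_nonneg μ]
    set U : H →L[ℂ] H := μ • X with hU
    have hUv : ∀ v, ‖aInner A (U v) v‖ ≤ aNorm A v ^ 2 := by
      intro v
      have he : aInner A (U v) v = (starRingEnd ℂ) μ * aInner A (X v) v := by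
        rw [hU, ContinuousLinearMap.smul_apply, aInner_smul_left]
      rw [he, norm_mul, Complex.norm_conj, hμabs, one_mul]
      exact hb v
    have hUU : aInner A (U (U x)) x = (t : ℂ) := by
      have h1 : U (U x) = (μ ^ 2) • (X (X x)) := by
        rw [hU]
        simp only [ContinuousLinearMap.smul_apply, map_smul]
        rw [smul_smul, pow_two]
      rw [h1, aInner_smul_left, hμ, Complex.conj_conj]
      field_simp
    set y := x + U x with hy
    set z := x - U x with hz
    have hid : aInner A y y + aInner A z z - aInner A (U y) y + aInner A (U z) z
        = aInner A x x + aInner A x x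
          - (aInner A (U (U x)) x + aInner A (U (U x)) x) := by
      rw [hy, hz]
      simp only [aInner, map_add, map_sub, inner_add_left, inner_add_right,
        inner_sub_left, inner_sub_right]
      ring
    rw [hUU] at hid
    have hre := congrArg Complex.re hid
    simp only [Complex.add_re, Complex.sub_re, Complex.ofReal_re] at hre
    have hxx : (aInner A x x).re = 1 := by
      rw [← aNorm_sq hA, hx]; norm_num
    rw [hxx] at hre
    have hyb : (aInner A (U y) y).re ≤ (aInner A y y).re := by
      calc (aInner A (U y) y).re ≤ ‖aInner A (U y) y‖ := Complex.re_le_norm _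
        _ ≤ aNorm A y ^ 2 := hUv y
        _ = (aInner A y y).re := aNorm_sq hA y
    have hzb : -((aInner A z z).re) ≤ (aInner A (U z) z).re := by
      have h1 : ‖aInner A (U z) z‖ ≤ (aInner A z z).re := by
        rw [← aNorm_sq hA]; exact hUv z
      have h2 := Complex.abs_re_le_norm (aInner A (U z) z)
      have h3 := abs_le.mp (le_trans h2 h1)
      linarith [h3.1]
    linarith

lemma power2_pos (hA : A.IsPositive) {X : H →L[ℂ] H} {w : ℝ} (hw : 0 < w)
    (hb : ∀ v, ‖aInner A (X v) v‖ ≤ w * aNorm A v ^ 2)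
    {x : H} (hx : aNorm A x = 1) :
    ‖aInner A (X (X x)) x‖ ≤ w ^ 2 := by
  set X' : H →L[ℂ] H := (((w⁻¹ : ℝ) : ℂ)) • X with hX'
  have hb' : ∀ v, ‖aInner A (X' v) v‖ ≤ aNorm A v ^ 2 := by
    intro v
    have he : aInner A (X' v) v = (starRingEnd ℂ) ((w⁻¹ : ℝ) : ℂ) * aInner A (X v) v := by
      rw [hX', ContinuousLinearMap.smul_apply, aInner_smul_left]
    rw [he, norm_mul, Complex.norm_conj, Complex.norm_real, Real.norm_eq_abs, abs_of_nonneg (by positivity)]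
    calc w⁻¹ * ‖aInner A (X v) v‖ ≤ w⁻¹ * (w * aNorm A v ^ 2) :=
          mul_le_mul_of_nonneg_left (hb v) (by positivity)
      _ = aNorm A v ^ 2 := by field_simp
  have hcore := power2_core hA hb' hx
  have hXX : aInner A (X' (X' x)) x
      = (((w⁻¹ * w⁻¹ : ℝ)) : ℂ) * aInner A (X (X x)) x := by
    have h1 : X' (X' x) = (((w⁻¹ * w⁻¹ : ℝ)) : ℂ) • (X (X x)) := by
      rw [hX']
      simp only [ContinuousLinearMap.smul_apply, map_smul]
      rw [smul_smul]
      push_cast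
      ring_nf
    rw [h1, aInner_smul_left, Complex.conj_ofReal]
  rw [hXX, norm_mul, Complex.norm_real, Real.norm_eq_abs, abs_of_nonneg (by positivity)] at hcore
  have h2 := mul_le_mul_of_nonneg_left hcore (le_of_lt (mul_pos hw hw))
  have h3 : w * w * (w⁻¹ * w⁻¹ * ‖aInner A (X (X x)) x‖)
      = ‖aInner A (X (X x)) x‖ := by
    field_simp
  rw [h3, mul_one] at h2
  calc ‖aInner A (X (X x)) x‖ ≤ w * w := h2
    _ = w ^ 2 := by ring

lemma power2 (hA : A.IsPositive) {X : H →L[ℂ] H} {w : ℝ} (hw : 0 ≤ w)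
    (hb : ∀ v, ‖aInner A (X v) v‖ ≤ w * aNorm A v ^ 2)
    {x : H} (hx : aNorm A x = 1) :
    ‖aInner A (X (X x)) x‖ ≤ w ^ 2 := by
  by_contra hcon
  push_neg at hcon
  set t := ‖aInner A (X (X x)) x‖ with ht
  have htnn : 0 ≤ t := norm_nonneg _
  set r := Real.sqrt t with hr
  have hwr : w < r := by
    rw [hr]
    rw [show w = Real.sqrt (w ^ 2) by rw [Real.sqrt_sq hw]]
    exact Real.sqrt_lt_sqrt (sq_nonneg w) hcon
  set ε := (r - w) / 2 with hε
  have hεpos : 0 < ε := by rw [hε]; linarith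
  have hb' : ∀ v, ‖aInner A (X v) v‖ ≤ (w + ε) * aNorm A v ^ 2 := by
    intro v
    calc ‖aInner A (X v) v‖ ≤ w * aNorm A v ^ 2 := hb v
      _ ≤ (w + ε) * aNorm A v ^ 2 := by
          apply mul_le_mul_of_nonneg_right (by linarith) (sq_nonneg _)
  have h1 := power2_pos hA (by linarith : (0:ℝ) < w + ε) hb' hx
  have h2 : (w + ε) ^ 2 < r ^ 2 := by
    apply pow_lt_pow_left₀ _ (by linarith) (by norm_num)
    rw [hε]; linarith
  rw [hr, Real.sq_sqrt htnn] at h2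
  rw [← ht] at h1
  linarith

lemma wA_smul_le (hA : A.IsPositive) {T : H →L[ℂ] H} (hT : Bnd A T) (c : ℂ) :
    wA A (c • T) ≤ ‖c‖ * wA A T := by
  apply wA_le (mul_nonneg (norm_nonneg c) (wA_nonneg T))
  intro x hx
  have he : aInner A ((c • T) x) x = (starRingEnd ℂ) c * aInner A (T x) x := by
    rw [ContinuousLinearMap.smul_apply, aInner_smul_left]
  rw [he, norm_mul, Complex.norm_conj]
  exact mul_le_mul_of_nonneg_left (le_wA hA hT hx) (norm_nonneg c)

lemma wA_add_le (hA : A.IsPositive) {T S : H →L[ℂ] H} (hT : Bnd A T) (hS : Bnd A S) :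
    wA A (T + S) ≤ wA A T + wA A S := by
  apply wA_le (add_nonneg (wA_nonneg T) (wA_nonneg S))
  intro x hx
  have he : aInner A ((T + S) x) x = aInner A (T x) x + aInner A (S x) x := by
    simp [aInner, map_add, inner_add_left]
  rw [he]
  calc ‖aInner A (T x) x + aInner A (S x) x‖
      ≤ ‖aInner A (T x) x‖ + ‖aInner A (S x) x‖ :=
        norm_add_le _ _
    _ ≤ wA A T + wA A S := add_le_add (le_wA hA hT hx) (le_wA hA hS hx)

lemma wA_sub_le (hA : A.IsPositive) {T S : H →L[ℂ] H} (hT : Bnd A T) (hS : Bnd A S) :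
    wA A (T - S) ≤ wA A T + wA A S := by
  apply wA_le (add_nonneg (wA_nonneg T) (wA_nonneg S))
  intro x hx
  have he : aInner A ((T - S) x) x = aInner A (T x) x - aInner A (S x) x := by
    simp [aInner, map_sub, inner_sub_left]
  rw [he]
  calc ‖aInner A (T x) x - aInner A (S x) x‖
      ≤ ‖aInner A (T x) x‖ + ‖aInner A (S x) x‖ :=
        abs_sub_le'' _ _
    _ ≤ wA A T + wA A S := add_le_add (le_wA hA hT hx) (le_wA hA hS hx)

lemma master (hA : A.IsPositive) {T S : H →L[ℂ] H} (hbT : Bnd A T) (hbS : Bnd A S)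
    (hc : T ∘L S = S ∘L T) :
    wA A (T ∘L S) ≤ (wA A T + wA A S) ^ 2 / 2 := by
  set X := T + S with hX
  set Y := T - S with hY
  have hbX : Bnd A X := bnd_add hA hbT hbS
  have hbY : Bnd A Y := bnd_sub hA hbT hbS
  have hwX : wA A X ≤ wA A T + wA A S := wA_add_le hA hbT hbS
  have hwY : wA A Y ≤ wA A T + wA A S := wA_sub_le hA hbT hbS
  have hwXn : 0 ≤ wA A X := wA_nonneg X
  have hwYn : 0 ≤ wA A Y := wA_nonneg Y
  apply wA_le (by positivity)
  intro x hx
  have hcx : T (S x) = S (T x) := by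
    have := congrArg (fun (f : H →L[ℂ] H) => f x) hc
    simpa using this
  -- vector identity
  have hvec : X (X x) - Y (Y x) = ((4 : ℝ) : ℂ) • ((T ∘L S) x) := by
    rw [hX, hY]
    simp only [ContinuousLinearMap.add_apply, ContinuousLinearMap.sub_apply,
      ContinuousLinearMap.comp_apply, map_add, map_sub]
    rw [hcx]
    push_cast
    module
  have hinner : aInner A (X (X x)) x - aInner A (Y (Y x)) x
      = ((4 : ℝ) : ℂ) * aInner A ((T ∘L S) x) x := by
    have h1 : aInner A (X (X x) - Y (Y x)) x
        = aInner A (X (X x)) x - aInner A (Y (Y x)) x := by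
      simp [aInner, map_sub, inner_sub_left]
    rw [← h1, hvec, aInner_smul_left, Complex.conj_ofReal]
  have hXp := power2 hA hwXn (abs_aInner_apply_le hA hbX) hx
  have hYp := power2 hA hwYn (abs_aInner_apply_le hA hbY) hx
  have habs : (4 : ℝ) * ‖aInner A ((T ∘L S) x) x‖
      ≤ wA A X ^ 2 + wA A Y ^ 2 := by
    calc (4 : ℝ) * ‖aInner A ((T ∘L S) x) x‖
        = ‖((4 : ℝ) : ℂ) * aInner A ((T ∘L S) x) x‖ := by
          rw [norm_mul, Complex.norm_real, Real.norm_eq_abs]; norm_num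
      _ = ‖aInner A (X (X x)) x - aInner A (Y (Y x)) x‖ := by rw [hinner]
      _ ≤ ‖aInner A (X (X x)) x‖ + ‖aInner A (Y (Y x)) x‖ :=
          abs_sub_le'' _ _
      _ ≤ wA A X ^ 2 + wA A Y ^ 2 := add_le_add hXp hYp
  have hXs : wA A X ^ 2 ≤ (wA A T + wA A S) ^ 2 := pow_le_pow_left₀ hwXn hwX 2
  have hYs : wA A Y ^ 2 ≤ (wA A T + wA A S) ^ 2 := pow_le_pow_left₀ hwYn hwY 2
  linarith

lemma master_scaled (hA : A.IsPositive) {T S : H →L[ℂ] H} (hbT : Bnd A T) (hbS : Bnd A S)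
    (hc : T ∘L S = S ∘L T) {t : ℝ} (ht : 0 < t) :
    wA A (T ∘L S) ≤ (t * wA A T + t⁻¹ * wA A S) ^ 2 / 2 := by
  set T' : H →L[ℂ] H := ((t : ℝ) : ℂ) • T with hT'
  set S' : H →L[ℂ] H := ((t⁻¹ : ℝ) : ℂ) • S with hS'
  have hmul : ((t : ℝ) : ℂ) * ((t⁻¹ : ℝ) : ℂ) = 1 := by
    push_cast
    field_simp
  have hTS : T' ∘L S' = T ∘L S := by
    rw [hT', hS', ContinuousLinearMap.smul_comp, ContinuousLinearMap.comp_smul, smul_smul, hmul,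
      one_smul]
  have hST : S' ∘L T' = S ∘L T := by
    rw [hT', hS', ContinuousLinearMap.smul_comp, ContinuousLinearMap.comp_smul, smul_smul,
      mul_comm, hmul, one_smul]
  have hc' : T' ∘L S' = S' ∘L T' := by rw [hTS, hST]; exact hc
  have hbT' : Bnd A T' := bnd_smul hA hbT _
  have hbS' : Bnd A S' := bnd_smul hA hbS _
  have h := master hA hbT' hbS' hc'
  rw [hTS] at h
  have hwT' : wA A T' ≤ t * wA A T := by
    have := wA_smul_le hA hbT ((t : ℝ) : ℂ)
    rwa [Complex.norm_real, Real.norm_eq_abs, abs_of_pos ht] at this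
  have hwS' : wA A S' ≤ t⁻¹ * wA A S := by
    have := wA_smul_le hA hbS ((t⁻¹ : ℝ) : ℂ)
    rwa [Complex.norm_real, Real.norm_eq_abs, abs_of_pos (by positivity)] at this
  have hsum : wA A T' + wA A S' ≤ t * wA A T + t⁻¹ * wA A S := add_le_add hwT' hwS'
  have hsq : (wA A T' + wA A S') ^ 2 ≤ (t * wA A T + t⁻¹ * wA A S) ^ 2 :=
    pow_le_pow_left₀ (add_nonneg (wA_nonneg T') (wA_nonneg S')) hsum 2
  linarith

theorem stmt13 (A T S : H →L[ℂ] H) (hA : A.IsPositive)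
    (hT : ∃ T', IsAAdjoint A T T') (hS : ∃ S', IsAAdjoint A S S')
    (hcomm : T ∘L S = S ∘L T) :
    wA A (T ∘L S) ≤ 2 * wA A T * wA A S := by
  have hbT : Bnd A T := bnd_of_aadjoint hA hT
  have hbS : Bnd A S := bnd_of_aadjoint hA hS
  set wT := wA A T with hwT
  set wS := wA A S with hwS
  have hwTn : 0 ≤ wT := wA_nonneg T
  have hwSn : 0 ≤ wS := wA_nonneg S
  rcases eq_or_lt_of_le hwTn with hT0 | hT0
  · -- wT = 0
    have key : ∀ ε : ℝ, 0 < ε → wA A (T ∘L S) ≤ ε := by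
      intro ε hε
      set τ := (wS + 1) / Real.sqrt (2 * ε) with hτ
      have hsq2 : Real.sqrt (2 * ε) > 0 := Real.sqrt_pos.mpr (by linarith)
      have hτpos : 0 < τ := by positivity
      have h := master_scaled hA hbT hbS hcomm hτpos
      rw [← hwT, ← hwS] at h
      rw [← hT0, mul_zero, zero_add] at h
      have hτinv : τ⁻¹ = Real.sqrt (2 * ε) / (wS + 1) := by
        rw [hτ]; field_simp
      have hbound : (τ⁻¹ * wS) ^ 2 / 2 ≤ ε := by
        rw [hτinv]
        have h1 : Real.sqrt (2 * ε) / (wS + 1) * wS ≤ Real.sqrt (2 * ε) := by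
          rw [div_mul_eq_mul_div, div_le_iff₀ (by linarith)]
          nlinarith [Real.sqrt_nonneg (2 * ε)]
        have h2 : (Real.sqrt (2 * ε) / (wS + 1) * wS) ^ 2 ≤ Real.sqrt (2 * ε) ^ 2 :=
          pow_le_pow_left₀ (by positivity) h1 2
        rw [Real.sq_sqrt (by linarith : (0:ℝ) ≤ 2 * ε)] at h2
        linarith
      linarith
    have hle : wA A (T ∘L S) ≤ 0 := by
      by_contra hcon
      push_neg at hcon
      have := key (wA A (T ∘L S) / 2) (by linarith)
      linarith
    calc wA A (T ∘L S) ≤ 0 := hle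
      _ ≤ 2 * wT * wS := by rw [← hT0]; ring_nf; positivity
  rcases eq_or_lt_of_le hwSn with hS0 | hS0
  · -- wS = 0
    have key : ∀ ε : ℝ, 0 < ε → wA A (T ∘L S) ≤ ε := by
      intro ε hε
      set τ := Real.sqrt (2 * ε) / (wT + 1) with hτ
      have hsq2 : Real.sqrt (2 * ε) > 0 := Real.sqrt_pos.mpr (by linarith)
      have hτpos : 0 < τ := by positivity
      have h := master_scaled hA hbT hbS hcomm hτpos
      rw [← hwT, ← hwS] at h
      rw [← hS0, mul_zero, add_zero] at h
      have hbound : (τ * wT) ^ 2 / 2 ≤ ε := by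
        have h1 : τ * wT ≤ Real.sqrt (2 * ε) := by
          rw [hτ, div_mul_eq_mul_div, div_le_iff₀ (by linarith)]
          nlinarith [Real.sqrt_nonneg (2 * ε)]
        have h2 : (τ * wT) ^ 2 ≤ Real.sqrt (2 * ε) ^ 2 :=
          pow_le_pow_left₀ (by positivity) h1 2
        rw [Real.sq_sqrt (by linarith : (0:ℝ) ≤ 2 * ε)] at h2
        linarith
      linarith
    have hle : wA A (T ∘L S) ≤ 0 := by
      by_contra hcon
      push_neg at hcon
      have := key (wA A (T ∘L S) / 2) (by linarith)
      linarith
    calc wA A (T ∘L S) ≤ 0 := hle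
      _ ≤ 2 * wT * wS := by rw [← hS0]; ring_nf; positivity
  · -- main case
    set τ := Real.sqrt (wS / wT) with hτ
    have hτpos : 0 < τ := Real.sqrt_pos.mpr (by positivity)
    have h := master_scaled hA hbT hbS hcomm hτpos
    rw [← hwT, ← hwS] at h
    have h1 : τ * wT = Real.sqrt (wT * wS) := by
      calc τ * wT = Real.sqrt (wS / wT) * Real.sqrt (wT ^ 2) := by
            rw [Real.sqrt_sq (le_of_lt hT0)]
        _ = Real.sqrt (wS / wT * wT ^ 2) := (Real.sqrt_mul (by positivity) _).symm
        _ = Real.sqrt (wT * wS) := by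
            congr 1
            field_simp
    have h2 : τ⁻¹ * wS = Real.sqrt (wT * wS) := by
      have hτinv : τ⁻¹ = Real.sqrt (wT / wS) := by
        rw [hτ, ← Real.sqrt_inv]
        congr 1
        field_simp
      calc τ⁻¹ * wS = Real.sqrt (wT / wS) * Real.sqrt (wS ^ 2) := by
            rw [hτinv, Real.sqrt_sq (le_of_lt hS0)]
        _ = Real.sqrt (wT / wS * wS ^ 2) := (Real.sqrt_mul (by positivity) _).symm
        _ = Real.sqrt (wT * wS) := by
            congr 1
            field_simp
    rw [h1, h2] at h
    have h3 : (Real.sqrt (wT * wS) + Real.sqrt (wT * wS)) ^ 2 / 2 = 2 * wT * wS := by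
      have : (Real.sqrt (wT * wS) + Real.sqrt (wT * wS)) ^ 2
          = 4 * Real.sqrt (wT * wS) ^ 2 := by ring
      rw [this, Real.sq_sqrt (by positivity)]
      ring
    rw [h3] at h
    exact h
end

section
/- For T admitting an A-adjoint and α ∈ [0,1], ‖T‖_{A,α}² ≤ (α/2) w_A(T²) + ‖(α/4)(T^{♯A}T + TT^{♯A}) + (1−α)T^{♯A}T‖_A. In particular, w_A(T)² ≤ (1/2)w_A(T²) + (1/4)‖T^{♯A}T + TT^{♯A}‖_A. -/
open scoped ComplexOrder
open ContinuousLinearMap Filter Topology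

variable {H : Type*} [NormedAddCommGroup H] [InnerProductSpace ℂ H] [CompleteSpace H]

section Auxiliary

local notation "⟪" x ", " y "⟫" => @inner ℂ _ _ x y

private lemma pow_helper {a b C : ℝ} (hb : 0 ≤ b)
    (h : ∀ n : ℕ, a ^ (2^n) ≤ C * b ^ (2^n)) : a ≤ b := by
  by_contra hab
  push_neg at hab
  have ha0 : 0 < a := lt_of_le_of_lt hb hab
  rcases eq_or_lt_of_le hb with hb0 | hb0
  · have := h 0
    simp [← hb0] at this
    nlinarith
  · have hr : 1 < a / b := (one_lt_div hb0).2 hab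
    obtain ⟨n, hn⟩ := pow_unbounded_of_one_lt C hr
    have h2 : (a/b) ^ n ≤ (a/b) ^ (2^n) :=
      pow_le_pow_right₀ hr.le (Nat.le_of_lt (Nat.lt_two_pow_self))
    have h3 : (a/b) ^ (2^n) ≤ C := by
      rw [div_pow, div_le_iff₀ (by positivity)]
      exact h n
    linarith

/-- Buzano's inequality. -/
private lemma buzano (u v w : H) (hw : ‖w‖ = 1) :
    ‖⟪u, w⟫ * ⟪w, v⟫‖ ≤ (‖⟪u, v⟫‖ + ‖u‖ * ‖v‖) / 2 := by
  set c : ℂ := ⟪w, u⟫ with hc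
  set d : ℂ := ⟪w, v⟫ with hd
  set u' : H := u - c • w with hu'
  set v' : H := v - d • w with hv'
  have hww : ⟪w, w⟫ = 1 := by
    rw [inner_self_eq_norm_sq_to_K, hw]; norm_num
  have hwu' : ⟪w, u'⟫ = 0 := by
    simp [hu', inner_sub_right, inner_smul_right, hww, hw, hc]
  have hwv' : ⟪w, v'⟫ = 0 := by
    simp [hv', inner_sub_right, inner_smul_right, hww, hw, hd]
  have hu'w : ⟪u', w⟫ = 0 := by
    rw [← inner_conj_symm, hwu', map_zero]
  have hv'w : ⟪v', w⟫ = 0 := by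
    rw [← inner_conj_symm, hwv', map_zero]
  have hudec : u = c • w + u' := by rw [hu']; abel
  have hvdec : v = d • w + v' := by rw [hv']; abel
  have huv : ⟪u, v⟫ = (starRingEnd ℂ) c * d + ⟪u', v'⟫ := by
    conv_lhs => rw [hudec, hvdec]
    rw [inner_add_left, inner_add_right, inner_add_right, inner_smul_left,
      inner_smul_right, inner_smul_right, hww, inner_smul_left, hwv', hu'w]
    ring
  have huw : ⟪u, w⟫ = (starRingEnd ℂ) c := by
    conv_lhs => rw [hudec]
    rw [inner_add_left, inner_smul_left, hww, hu'w]; ring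
  have hnu : ‖u‖ ^ 2 = ‖c‖ ^ 2 + ‖u'‖ ^ 2 := by
    have := norm_add_sq (𝕜 := ℂ) (c • w) u'
    rw [← hudec, inner_smul_left, hwu', mul_zero, map_zero] at this
    simp [norm_smul, hw, mul_pow] at this
    linarith
  have hnv : ‖v‖ ^ 2 = ‖d‖ ^ 2 + ‖v'‖ ^ 2 := by
    have := norm_add_sq (𝕜 := ℂ) (d • w) v'
    rw [← hvdec, inner_smul_left, hwv', mul_zero, map_zero] at this
    simp [norm_smul, hw, mul_pow] at this
    linarith
  have hkey : ‖(starRingEnd ℂ) c * d - ⟪u', v'⟫‖ ≤ ‖u‖ * ‖v‖ := by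
    have h1 : ‖(starRingEnd ℂ) c * d - ⟪u', v'⟫‖ ≤
        ‖c‖ * ‖d‖ + ‖u'‖ * ‖v'‖ := by
      calc ‖(starRingEnd ℂ) c * d - ⟪u', v'⟫‖
          ≤ ‖(starRingEnd ℂ) c * d‖ + ‖⟪u', v'⟫‖ := by
            simpa using norm_sub_le ((starRingEnd ℂ) c * d) ⟪u', v'⟫
        _ ≤ ‖c‖ * ‖d‖ + ‖u'‖ * ‖v'‖ := by
            rw [norm_mul, Complex.norm_conj]
            have := norm_inner_le_norm (𝕜 := ℂ) u' v'
            linarith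
    have h2 : ‖c‖ * ‖d‖ + ‖u'‖ * ‖v'‖ ≤ ‖u‖ * ‖v‖ := by
      have hx0 : (0:ℝ) ≤ ‖c‖ * ‖d‖ + ‖u'‖ * ‖v'‖ := by positivity
      have hy0 : (0:ℝ) ≤ ‖u‖ * ‖v‖ := by positivity
      have hs : (‖c‖ * ‖d‖ + ‖u'‖ * ‖v'‖) ^ 2 ≤ (‖u‖ * ‖v‖) ^ 2 := by
        have h' : (‖u‖ * ‖v‖) ^ 2 = ‖u‖ ^ 2 * ‖v‖ ^ 2 := by ring
        rw [h', hnu, hnv]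
        nlinarith [sq_nonneg (‖c‖ * ‖v'‖ - ‖d‖ * ‖u'‖)]
      calc ‖c‖ * ‖d‖ + ‖u'‖ * ‖v'‖
          = Real.sqrt ((‖c‖ * ‖d‖ + ‖u'‖ * ‖v'‖) ^ 2) :=
            (Real.sqrt_sq hx0).symm
        _ ≤ Real.sqrt ((‖u‖ * ‖v‖) ^ 2) := Real.sqrt_le_sqrt hs
        _ = ‖u‖ * ‖v‖ := Real.sqrt_sq hy0
    linarith
  have hprod : ⟪u, w⟫ * ⟪w, v⟫ = (starRingEnd ℂ) c * d := by rw [huw, hd]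
  have habs : ‖2 * ((starRingEnd ℂ) c * d)‖ ≤ ‖⟪u, v⟫‖ + ‖u‖ * ‖v‖ := by
    have he : (2 : ℂ) * ((starRingEnd ℂ) c * d) = ⟪u, v⟫ + ((starRingEnd ℂ) c * d - ⟪u', v'⟫) := by
      rw [huv]; ring
    rw [he]
    exact le_trans (norm_add_le _ _) (by linarith)
  rw [norm_mul] at habs
  simp only [Complex.norm_two] at habs
  rw [hprod]
  linarith

/-- `‖B y‖² = re ⟪A y, y⟫` when `A = B * B`, `B` self-adjoint. -/
private lemma normB_sq (A B : H →L[ℂ] H) (hB : adjoint B = B) (hAB : B * B = A) (y : H) :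
    ‖B y‖ ^ 2 = (⟪A y, y⟫).re := by
  rw [← hAB]
  have h : (⟪(B * B) y, y⟫) = ⟪B y, B y⟫ := by
    rw [mul_apply_eq_comp]; nth_rewrite 1 [← hB]; rw [adjoint_inner_left]
  rw [h]
  have := inner_self_eq_norm_sq (𝕜 := ℂ) (B y)
  rw [RCLike.re_to_complex] at this
  exact this.symm

/-- `⟪A u, v⟫ = ⟪B u, B v⟫`. -/
private lemma innerB (A B : H →L[ℂ] H) (hB : adjoint B = B) (hAB : B * B = A) (u v : H) :
    (⟪A u, v⟫) = ⟪B u, B v⟫ := by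
  rw [← hAB, mul_apply_eq_comp]
  nth_rewrite 1 [← hB]
  rw [adjoint_inner_left]

private lemma innerA_symm (A : H →L[ℂ] H) (hAsa : adjoint A = A) (u v : H) :
    (⟪A u, v⟫) = ⟪u, A v⟫ := by
  nth_rewrite 1 [← hAsa]
  rw [adjoint_inner_left]

/-- The fundamental boundedness lemma: if `A K = K† A` then `K` is `A`-bounded with
constant `‖K‖`. -/
private lemma abound (A B K : H →L[ℂ] H) (hB : adjoint B = B) (hAB : B * B = A)
    (hK : A * K = adjoint K * A) (x : H) : ‖B (K x)‖ ≤ ‖K‖ * ‖B x‖ := by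
  have hKm : ∀ m : ℕ, A * K ^ m = adjoint (K ^ m) * A := by
    intro m
    induction m with
    | zero => simp [← star_eq_adjoint]
    | succ m ih =>
      have h : A * K ^ (m+1) = adjoint (K ^ m) * (A * K) := by
        rw [pow_succ, ← mul_assoc, ih, mul_assoc]
      rw [h, hK, ← mul_assoc, ← star_eq_adjoint, ← star_eq_adjoint, ← star_eq_adjoint,
        ← star_mul, ← pow_succ']
  have step : ∀ m : ℕ, ‖B ((K ^ m) x)‖ ^ 2 ≤ ‖B x‖ * ‖B ((K ^ (2 * m)) x)‖ := by
    intro m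
    have h1 : ‖B ((K ^ m) x)‖ ^ 2 = (⟪A ((K ^ m) x), (K ^ m) x⟫).re :=
      normB_sq A B hB hAB _
    have h2 : (⟪A ((K ^ m) x), (K ^ m) x⟫) = ⟪B x, B ((K ^ (2*m)) x)⟫ := by
      have hA' : A ((K ^ m) x) = adjoint (K ^ m) (A x) := by
        have := congrArg (fun f => f x) (hKm m)
        simpa [mul_apply_eq_comp] using this
      rw [hA', adjoint_inner_left]
      have hKK : (K ^ m) ((K ^ m) x) = (K ^ (2*m)) x := by
        rw [two_mul, pow_add, mul_apply_eq_comp]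
      rw [hKK, innerB A B hB hAB]
    rw [h1, h2]
    calc (⟪B x, B ((K ^ (2*m)) x)⟫).re ≤ ‖(⟪B x, B ((K ^ (2*m)) x)⟫)‖ := Complex.re_le_norm _
      _ ≤ ‖B x‖ * ‖B ((K ^ (2*m)) x)‖ := norm_inner_le_norm _ _
  have iter : ∀ n : ℕ, ‖B (K x)‖ ^ (2 ^ n) ≤ ‖B ((K ^ (2 ^ n)) x)‖ * ‖B x‖ ^ (2 ^ n - 1) := by
    intro n
    induction n with
    | zero => simp
    | succ n ih =>
      have h1 : (1:ℕ) ≤ 2 ^ n := Nat.one_le_two_pow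
      have hp : 2 ^ (n+1) = 2 * 2 ^ n := by rw [pow_succ]; ring
      have e1 : ‖B (K x)‖ ^ (2 ^ (n+1)) = (‖B (K x)‖ ^ (2 ^ n)) ^ 2 := by
        rw [← pow_mul, pow_succ]
      rw [e1]
      calc (‖B (K x)‖ ^ (2 ^ n)) ^ 2
          ≤ (‖B ((K ^ (2 ^ n)) x)‖ * ‖B x‖ ^ (2 ^ n - 1)) ^ 2 := by
            apply pow_le_pow_left₀ (by positivity) ih
        _ = ‖B ((K ^ (2 ^ n)) x)‖ ^ 2 * ‖B x‖ ^ ((2 ^ n - 1) * 2) := by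
            rw [mul_pow, ← pow_mul]
        _ ≤ (‖B x‖ * ‖B ((K ^ (2 * 2 ^ n)) x)‖) * ‖B x‖ ^ ((2 ^ n - 1) * 2) := by
            apply mul_le_mul_of_nonneg_right (step (2 ^ n)) (by positivity)
        _ = ‖B ((K ^ (2 ^ (n+1))) x)‖ * (‖B x‖ ^ ((2 ^ n - 1) * 2) * ‖B x‖) := by
            rw [← hp]; ring
        _ = ‖B ((K ^ (2 ^ (n+1))) x)‖ * ‖B x‖ ^ (2 ^ (n+1) - 1) := by
            rw [← pow_succ, show (2 ^ n - 1) * 2 + 1 = 2 ^ (n+1) - 1 by omega]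
  by_cases h0 : ‖B x‖ = 0
  · have hs := step 1
    rw [h0] at hs
    simp only [pow_one, zero_mul] at hs
    have h2 : ‖B (K x)‖ = 0 := by nlinarith [norm_nonneg (B (K x))]
    rw [h0, h2, mul_zero]
  · have hb0 : 0 < ‖B x‖ := lt_of_le_of_ne (norm_nonneg _) (Ne.symm h0)
    apply pow_helper (b := ‖K‖ * ‖B x‖) (C := ‖B‖ * ‖x‖ / ‖B x‖) (by positivity)
    intro n
    have h1 : (1:ℕ) ≤ 2 ^ n := Nat.one_le_two_pow
    have hb1 : ‖B ((K ^ (2 ^ n)) x)‖ ≤ ‖B‖ * (‖K‖ ^ (2 ^ n) * ‖x‖) :=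
      calc ‖B ((K ^ (2 ^ n)) x)‖ ≤ ‖B‖ * ‖(K ^ (2 ^ n)) x‖ := le_opNorm _ _
        _ ≤ ‖B‖ * (‖K ^ (2 ^ n)‖ * ‖x‖) := by
            apply mul_le_mul_of_nonneg_left (le_opNorm _ _) (norm_nonneg _)
        _ ≤ ‖B‖ * (‖K‖ ^ (2 ^ n) * ‖x‖) := by
            apply mul_le_mul_of_nonneg_left
              (mul_le_mul_of_nonneg_right (norm_pow_le' K (by positivity)) (norm_nonneg _))
              (norm_nonneg _)
    calc ‖B (K x)‖ ^ (2 ^ n)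
        ≤ ‖B ((K ^ (2 ^ n)) x)‖ * ‖B x‖ ^ (2 ^ n - 1) := iter n
      _ ≤ (‖B‖ * (‖K‖ ^ (2 ^ n) * ‖x‖)) * ‖B x‖ ^ (2 ^ n - 1) := by
          apply mul_le_mul_of_nonneg_right hb1 (by positivity)
      _ = ‖B‖ * ‖x‖ / ‖B x‖ * (‖K‖ * ‖B x‖) ^ (2 ^ n) := by
          obtain ⟨k, hk⟩ : ∃ k, 2 ^ n = k + 1 := ⟨2 ^ n - 1, by omega⟩
          rw [hk, Nat.add_sub_cancel, mul_pow, pow_succ]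
          field_simp
          ring

private lemma aNorm_eq (A B : H →L[ℂ] H) (hB : adjoint B = B) (hAB : B * B = A) (y : H) :
    aNorm A y = ‖B y‖ := by
  rw [aNorm, aInner, ← normB_sq A B hB hAB, Real.sqrt_sq (norm_nonneg _)]

set_option synthInstance.maxHeartbeats 1000000 in
set_option maxHeartbeats 1000000 in
private lemma norm_le_opNormA (A B M : H →L[ℂ] H) (hAsa : adjoint A = A)
    (hB : adjoint B = B) (hAB : B * B = A) (hM : A * M = adjoint M * A)
    (x : H) (hx : ‖B x‖ = 1) : ‖B (M x)‖ ≤ opNormA A M := by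
  set V : Submodule ℂ H := (LinearMap.range (A : H →ₗ[ℂ] H)).topologicalClosure with hV
  haveI : CompleteSpace V :=
    (Submodule.isClosed_topologicalClosure _).isComplete.completeSpace_coe
  set x' : H := (V.orthogonalProjection x : H) with hx'
  have hnmem : x - x' ∈ Vᗮ := V.sub_starProjection_mem_orthogonal x
  have hAn : A (x - x') = 0 := by
    have horth : ∀ v ∈ V, ⟪v, x - x'⟫ = 0 := fun v hv =>
      (Submodule.mem_orthogonal V (x - x')).1 hnmem v hv
    have h1 : (⟪A (x - x'), A (x - x')⟫) = 0 := by
      nth_rewrite 1 [← hAsa]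
      rw [adjoint_inner_left, ← inner_conj_symm]
      rw [horth (A (A (x - x')))
        (Submodule.le_topologicalClosure _ (LinearMap.mem_range_self _ _))]
      simp
    exact inner_self_eq_zero.1 h1
  have hBn : B (x - x') = 0 := by
    have h2 : ‖B (x - x')‖ ^ 2 = 0 := by
      rw [normB_sq A B hB hAB, hAn]; simp
    have := pow_eq_zero_iff (n := 2) (by norm_num) |>.1 h2
    exact norm_eq_zero.1 this
  have hBx' : B x' = B x := by
    have h : B x - B x' = 0 := by rw [← map_sub]; exact hBn
    linear_combination (norm := module) -h
  have hBMx' : B (M x') = B (M x) := by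
    have h3 : ‖B (M (x - x'))‖ ≤ ‖M‖ * ‖B (x - x')‖ := abound A B M hB hAB hM _
    rw [hBn, norm_zero, mul_zero] at h3
    have h4 : B (M (x - x')) = 0 := norm_eq_zero.1 (le_antisymm h3 (norm_nonneg _))
    rw [map_sub, map_sub] at h4
    linear_combination (norm := module) -h4
  have hmem : ‖B (M x)‖ ∈
      {r | ∃ y ∈ closure (Set.range ⇑A), aNorm A y = 1 ∧ r = aNorm A (M y)} := by
    refine ⟨x', ?_, ?_, ?_⟩
    · have h5 : x' ∈ V := (V.orthogonalProjection x).2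
      have h6 : (V : Set H) = closure (Set.range ⇑A) := by
        rw [hV, Submodule.topologicalClosure_coe]
        congr 1
      rw [← h6]
      exact h5
    · rw [aNorm_eq A B hB hAB, hBx', hx]
    · rw [aNorm_eq A B hB hAB, hBMx']
  have hbdd : BddAbove
      {r | ∃ y ∈ closure (Set.range ⇑A), aNorm A y = 1 ∧ r = aNorm A (M y)} := by
    refine ⟨‖M‖, fun r hr => ?_⟩
    obtain ⟨y, -, hy1, rfl⟩ := hr
    rw [aNorm_eq A B hB hAB] at hy1 ⊢
    calc ‖B (M y)‖ ≤ ‖M‖ * ‖B y‖ := abound A B M hB hAB hM y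
      _ = ‖M‖ := by rw [hy1, mul_one]
  exact le_csSup hbdd hmem

end Auxiliary

section Main

local notation "⟪" x ", " y "⟫" => @inner ℂ _ _ x y

set_option synthInstance.maxHeartbeats 1000000 in
set_option maxHeartbeats 2000000 in
theorem stmt18 (A T S : H →L[ℂ] H) (hA : A.IsPositive) (hT : IsAAdjoint A T S)
    (α : ℝ) (hα : α ∈ Set.Icc (0:ℝ) 1) :
    alphaNorm A T α ^ 2 ≤
      (α/2) * wA A (T ∘L T) +
        opNormA A ((α/4) • (S ∘L T + T ∘L S) + (1 - α) • (S ∘L T)) ∧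
    wA A T ^ 2 ≤ (1/2) * wA A (T ∘L T) + (1/4) * opNormA A (S ∘L T + T ∘L S) := by
  obtain ⟨hα0, hα1⟩ := hα
  have hApos : (0 : H →L[ℂ] H) ≤ A := (nonneg_iff_isPositive A).2 hA
  set B : H →L[ℂ] H := CFC.sqrt A with hBdef
  have hBpos : (0 : H →L[ℂ] H) ≤ B := CFC.sqrt_nonneg A
  have hB : adjoint B = B := by
    rw [← star_eq_adjoint]
    exact ((nonneg_iff_isPositive B).1 hBpos).isSelfAdjoint
  have hAB : B * B = A := by
    have h := CFC.sq_sqrt A hApos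
    rwa [sq] at h
  have hAsa : adjoint A = A := by rw [← star_eq_adjoint]; exact hA.isSelfAdjoint
  have hAS : A * S = adjoint T * A := hT.1
  have hAT : A * T = adjoint S * A := by
    have h := congrArg star hAS
    simp only [star_mul, star_eq_adjoint, hAsa, adjoint_adjoint] at h
    exact h.symm
  have hK1 : A * (S * T) = adjoint (S * T) * A := by
    rw [← mul_assoc, hAS, mul_assoc, hAT, ← mul_assoc, ← star_eq_adjoint,
      ← star_eq_adjoint, ← star_eq_adjoint, ← star_mul]
  have hK2 : A * (T * S) = adjoint (T * S) * A := by
    rw [← mul_assoc, hAT, mul_assoc, hAS, ← mul_assoc, ← star_eq_adjoint,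
      ← star_eq_adjoint, ← star_eq_adjoint, ← star_mul]
  -- pointwise identities
  have I2 : ∀ x : H, (⟪B x, B (S x)⟫) = ⟪A (T x), x⟫ := by
    intro x
    rw [← innerB A B hB hAB x (S x), innerA_symm A hAsa]
    have h : A (S x) = adjoint T (A x) := by rw [← mul_apply_eq_comp, hAS, mul_apply_eq_comp]
    rw [h, adjoint_inner_right, ← innerA_symm A hAsa]
  have I3 : ∀ x : H, (⟪B (T x), B (S x)⟫) = ⟪A (T (T x)), x⟫ := by
    intro x
    rw [← innerB A B hB hAB, innerA_symm A hAsa]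
    have h : A (S x) = adjoint T (A x) := by rw [← mul_apply_eq_comp, hAS, mul_apply_eq_comp]
    rw [h, adjoint_inner_right, ← innerA_symm A hAsa]
  have I4 : ∀ x : H, ‖B (T x)‖ ^ 2 = (⟪A ((S * T) x), x⟫).re := by
    intro x
    rw [normB_sq A B hB hAB]
    have h : A (T x) = adjoint S (A x) := by rw [← mul_apply_eq_comp, hAT, mul_apply_eq_comp]
    rw [h, adjoint_inner_left]
    have h2 : S (T x) = (S * T) x := (mul_apply_eq_comp S T x).symm
    rw [h2, innerA_symm A hAsa x, ← inner_conj_symm]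
    exact (Complex.conj_re _).symm
  have I5 : ∀ x : H, ‖B (S x)‖ ^ 2 = (⟪A ((T * S) x), x⟫).re := by
    intro x
    rw [normB_sq A B hB hAB]
    have h : A (S x) = adjoint T (A x) := by rw [← mul_apply_eq_comp, hAS, mul_apply_eq_comp]
    rw [h, adjoint_inner_left]
    have h2 : T (S x) = (T * S) x := (mul_apply_eq_comp T S x).symm
    rw [h2, innerA_symm A hAsa x, ← inner_conj_symm]
    exact (Complex.conj_re _).symm
  -- A-boundedness of T
  have hBT : ∀ y : H, ‖B (T y)‖ ≤ Real.sqrt ‖S * T‖ * ‖B y‖ := by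
    intro y
    have h1 : ‖B (T y)‖ ^ 2 ≤ ‖S * T‖ * ‖B y‖ ^ 2 := by
      rw [I4 y]
      have h2 : (⟪A ((S * T) y), y⟫).re = (⟪B ((S * T) y), B y⟫).re := by
        rw [innerB A B hB hAB]
      rw [h2]
      calc (⟪B ((S * T) y), B y⟫).re ≤ ‖(⟪B ((S * T) y), B y⟫)‖ := Complex.re_le_norm _
        _ ≤ ‖B ((S * T) y)‖ * ‖B y‖ := norm_inner_le_norm _ _
        _ ≤ (‖S * T‖ * ‖B y‖) * ‖B y‖ :=
            mul_le_mul_of_nonneg_right (abound A B _ hB hAB hK1 y) (norm_nonneg _)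
        _ = ‖S * T‖ * ‖B y‖ ^ 2 := by ring
    calc ‖B (T y)‖ = Real.sqrt (‖B (T y)‖ ^ 2) := (Real.sqrt_sq (norm_nonneg _)).symm
      _ ≤ Real.sqrt (‖S * T‖ * ‖B y‖ ^ 2) := Real.sqrt_le_sqrt h1
      _ = Real.sqrt ‖S * T‖ * ‖B y‖ := by
          rw [Real.sqrt_mul (norm_nonneg _), Real.sqrt_sq (norm_nonneg _)]
  -- the numerical radius of T ∘L T : bounded above
  have hwbdd : BddAbove {r | ∃ x, aNorm A x = 1 ∧
      r = ‖aInner A ((T ∘L T) x) x‖} := by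
    refine ⟨Real.sqrt ‖S * T‖ * Real.sqrt ‖S * T‖, fun r hr => ?_⟩
    obtain ⟨y, hy1, rfl⟩ := hr
    rw [aNorm_eq A B hB hAB] at hy1
    have he : aInner A ((T ∘L T) y) y = ⟪B (T (T y)), B y⟫ := by
      rw [aInner, ContinuousLinearMap.comp_apply, innerB A B hB hAB]
    rw [he]
    calc ‖⟪B (T (T y)), B y⟫‖ = ‖(⟪B (T (T y)), B y⟫)‖ :=
          rfl
      _ ≤ ‖B (T (T y))‖ * ‖B y‖ := norm_inner_le_norm _ _
      _ = ‖B (T (T y))‖ := by rw [hy1, mul_one]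
      _ ≤ Real.sqrt ‖S * T‖ * ‖B (T y)‖ := hBT (T y)
      _ ≤ Real.sqrt ‖S * T‖ * (Real.sqrt ‖S * T‖ * ‖B y‖) :=
          mul_le_mul_of_nonneg_left (hBT y) (Real.sqrt_nonneg _)
      _ = Real.sqrt ‖S * T‖ * Real.sqrt ‖S * T‖ := by rw [hy1, mul_one]
  set W2 : ℝ := wA A (T ∘L T) with hW2
  have hW2nn : 0 ≤ W2 := by
    apply Real.sSup_nonneg
    rintro r ⟨y, -, rfl⟩
    exact norm_nonneg _
  -- core inequality
  have core : ∀ x : H, ‖B x‖ = 1 →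
      ‖⟪A (T x), x⟫‖ ^ 2 ≤
        W2 / 2 + ((⟪A ((S * T) x), x⟫).re + (⟪A ((T * S) x), x⟫).re) / 4 := by
    intro x hx
    have hb := buzano (B (T x)) (B (S x)) (B x) hx
    rw [← innerB A B hB hAB (T x) x, I2 x, I3 x] at hb
    have hw : ‖⟪A (T (T x)), x⟫‖ ≤ W2 := by
      apply le_csSup hwbdd
      refine ⟨x, by rw [aNorm_eq A B hB hAB, hx], ?_⟩
      rw [aInner, ContinuousLinearMap.comp_apply]
    have hamgm : ‖B (T x)‖ * ‖B (S x)‖ ≤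
        ((⟪A ((S * T) x), x⟫).re + (⟪A ((T * S) x), x⟫).re) / 2 := by
      rw [← I4 x, ← I5 x]
      nlinarith [sq_nonneg (‖B (T x)‖ - ‖B (S x)‖)]
    have hsq : ‖⟪A (T x), x⟫ * ⟪A (T x), x⟫‖ =
        ‖⟪A (T x), x⟫‖ ^ 2 := by rw [norm_mul, sq]
    rw [hsq] at hb
    linarith
  -- operators
  have hK1' : A * (S * T) = star (S * T) * A := by rw [hK1, star_eq_adjoint]
  have hK2' : A * (T * S) = star (T * S) * A := by rw [hK2, star_eq_adjoint]
  have hM : A * (S ∘L T + T ∘L S) = adjoint (S ∘L T + T ∘L S) * A := by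
    show A * (S * T + T * S) = adjoint (S * T + T * S) * A
    rw [← star_eq_adjoint, mul_add, hK1', hK2', star_add, add_mul]
  have hR : A * ((α/4) • (S ∘L T + T ∘L S) + (1 - α) • (S ∘L T)) =
      adjoint ((α/4) • (S ∘L T + T ∘L S) + (1 - α) • (S ∘L T)) * A := by
    show A * ((α/4) • (S * T + T * S) + (1 - α) • (S * T)) =
      adjoint ((α/4) • (S * T + T * S) + (1 - α) • (S * T)) * A
    rw [← star_eq_adjoint, mul_add, mul_smul_comm, mul_smul_comm, mul_add, hK1', hK2']
    simp only [star_add, star_smul, star_trivial]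
    rw [add_mul, smul_mul_assoc, smul_mul_assoc, add_mul]
  -- re ⟨A R x, x⟩
  have hRe : ∀ x : H,
      (⟪A (((α/4) • (S ∘L T + T ∘L S) + (1 - α) • (S ∘L T)) x), x⟫).re =
      (α/4) * ((⟪A ((S * T) x), x⟫).re + (⟪A ((T * S) x), x⟫).re) +
        (1 - α) * (⟪A ((S * T) x), x⟫).re := by
    intro x
    have hx : ((α/4) • (S ∘L T + T ∘L S) + (1 - α) • (S ∘L T)) x =
        (α/4 : ℝ) • ((S * T) x + (T * S) x) + ((1 - α : ℝ)) • ((S * T) x) := rfl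
    rw [hx, ← Complex.coe_smul, ← Complex.coe_smul,
      map_add, map_smul, map_smul, map_add, inner_add_left, inner_smul_left,
      inner_smul_left, inner_add_left, Complex.conj_ofReal, Complex.conj_ofReal]
    simp only [Complex.add_re, Complex.mul_re, Complex.ofReal_re, Complex.ofReal_im,
      zero_mul, sub_zero]
  -- bound re ⟨A N x, x⟩ ≤ opNormA A N for A-selfadjoint-type N, unit x
  have hNormBound : ∀ N : H →L[ℂ] H, A * N = adjoint N * A → ∀ x : H, ‖B x‖ = 1 →
      (⟪A (N x), x⟫).re ≤ opNormA A N := by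
    intro N hN x hx
    have h1 : (⟪A (N x), x⟫).re = (⟪B (N x), B x⟫).re := by rw [innerB A B hB hAB]
    rw [h1]
    calc (⟪B (N x), B x⟫).re ≤ ‖(⟪B (N x), B x⟫)‖ := Complex.re_le_norm _
      _ ≤ ‖B (N x)‖ * ‖B x‖ := norm_inner_le_norm _ _
      _ = ‖B (N x)‖ := by rw [hx, mul_one]
      _ ≤ opNormA A N := norm_le_opNormA A B N hAsa hB hAB hN x hx
  have hopRnn : 0 ≤ opNormA A ((α/4) • (S ∘L T + T ∘L S) + (1 - α) • (S ∘L T)) := by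
    apply Real.sSup_nonneg
    rintro r ⟨y, -, -, rfl⟩
    exact Real.sqrt_nonneg _
  have hopMnn : 0 ≤ opNormA A (S ∘L T + T ∘L S) := by
    apply Real.sSup_nonneg
    rintro r ⟨y, -, -, rfl⟩
    exact Real.sqrt_nonneg _
  constructor
  · -- part 1
    set D1 : ℝ := (α/2) * W2 +
      opNormA A ((α/4) • (S ∘L T + T ∘L S) + (1 - α) • (S ∘L T)) with hD1
    have hD1nn : 0 ≤ D1 := by
      rw [hD1]
      have h9 : 0 ≤ (α/2) * W2 := mul_nonneg (by linarith) hW2nn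
      linarith [hopRnn]
    have hub : ∀ r ∈ {r | ∃ x, aNorm A x = 1 ∧
        r = Real.sqrt (α * ‖aInner A (T x) x‖ ^ 2 +
          (1 - α) * aNorm A (T x) ^ 2)}, r ≤ Real.sqrt D1 := by
      rintro r ⟨y, hy1, rfl⟩
      rw [aNorm_eq A B hB hAB] at hy1
      apply Real.sqrt_le_sqrt
      have hcore := core y hy1
      have hI4 := I4 y
      have hRey := hRe y
      have hNR := hNormBound _ hR y hy1
      have habs : aInner A (T y) y = ⟪A (T y), y⟫ := rfl
      rw [habs, aNorm_eq A B hB hAB, hI4, hD1]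
      nlinarith [mul_le_mul_of_nonneg_left hcore hα0, hRey, hNR]
    have h1 : alphaNorm A T α ≤ Real.sqrt D1 := Real.sSup_le hub (Real.sqrt_nonneg _)
    have h2 : 0 ≤ alphaNorm A T α := by
      apply Real.sSup_nonneg
      rintro r ⟨y, -, rfl⟩
      exact Real.sqrt_nonneg _
    calc alphaNorm A T α ^ 2 ≤ Real.sqrt D1 ^ 2 := pow_le_pow_left₀ h2 h1 2
      _ = D1 := Real.sq_sqrt hD1nn
  · -- part 2
    set D2 : ℝ := (1/2) * W2 + (1/4) * opNormA A (S ∘L T + T ∘L S) with hD2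
    have hD2nn : 0 ≤ D2 := by
      rw [hD2]
      linarith [hopMnn, hW2nn]
    have hub : ∀ r ∈ {r | ∃ x, aNorm A x = 1 ∧
        r = ‖aInner A (T x) x‖}, r ≤ Real.sqrt D2 := by
      rintro r ⟨y, hy1, rfl⟩
      rw [aNorm_eq A B hB hAB] at hy1
      have hcore := core y hy1
      have hsum : (⟪A ((S * T) y), y⟫).re + (⟪A ((T * S) y), y⟫).re =
          (⟪A ((S ∘L T + T ∘L S) y), y⟫).re := by
        have h : (S ∘L T + T ∘L S) y = (S * T) y + (T * S) y := rfl
        rw [h, map_add, inner_add_left, Complex.add_re]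
      have hNM := hNormBound _ hM y hy1
      have h7 : (⟪A ((S * T) y), y⟫).re + (⟪A ((T * S) y), y⟫).re ≤
          opNormA A (S ∘L T + T ∘L S) := by rw [hsum]; exact hNM
      have habs : aInner A (T y) y = ⟪A (T y), y⟫ := rfl
      rw [habs]
      have hle : ‖⟪A (T y), y⟫‖ ^ 2 ≤ D2 := by
        rw [hD2]
        linarith [hcore, h7]
      calc ‖⟪A (T y), y⟫‖
          = Real.sqrt (‖⟪A (T y), y⟫‖ ^ 2) :=
            (Real.sqrt_sq (norm_nonneg _)).symm
        _ ≤ Real.sqrt D2 := Real.sqrt_le_sqrt hle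
    have h1 : wA A T ≤ Real.sqrt D2 := Real.sSup_le hub (Real.sqrt_nonneg _)
    have h2 : 0 ≤ wA A T := by
      apply Real.sSup_nonneg
      rintro r ⟨y, -, rfl⟩
      exact norm_nonneg _
    calc wA A T ^ 2 ≤ Real.sqrt D2 ^ 2 := pow_le_pow_left₀ h2 h1 2
      _ = D2 := Real.sq_sqrt hD2nn

end Main
end
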